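/- Let ε > 0 be real, let m ≥ 1 be an integer, let h be an integer with 0 ≤ h ≤ m−1, and let y be real with 1 ≤ y ≤ ((1+ε)/ε)^{1/m}. Set b := ε/(1+ε), x := y · b^{(m−h)/m}, and V := ∑_{i=0}^{h} b^{(m−i)/m} + x · (m−h−1). Then f(m,ε) ≤ V/x ≤ m, where f(m,ε) := (ε/(1+ε)) · ∑_{j=0}^{m−1} ((1+ε)/ε)^{j/m}. -/
import Mathlib


theorem stmt_8 (ε : ℝ) (hε : 0 < ε) (m : ℕ) (hm : 1 ≤ m) (h : ℕ) (hh : h ≤ m - 1)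
    (y : ℝ) (hy1 : 1 ≤ y) (hy2 : y ≤ ((1 + ε) / ε) ^ ((1 : ℝ) / m)) :
    (ε / (1 + ε)) * ∑ j ∈ Finset.range m, ((1 + ε) / ε) ^ ((j : ℝ) / m)
        ≤ ((∑ i ∈ Finset.range (h + 1), (ε / (1 + ε)) ^ (((m : ℝ) - i) / m))
            + (y * (ε / (1 + ε)) ^ (((m : ℝ) - h) / m)) * ((m : ℝ) - h - 1))
          / (y * (ε / (1 + ε)) ^ (((m : ℝ) - h) / m)) ∧
    ((∑ i ∈ Finset.range (h + 1), (ε / (1 + ε)) ^ (((m : ℝ) - i) / m))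
        + (y * (ε / (1 + ε)) ^ (((m : ℝ) - h) / m)) * ((m : ℝ) - h - 1))
      / (y * (ε / (1 + ε)) ^ (((m : ℝ) - h) / m)) ≤ (m : ℝ) := by
  have h1ε : (0:ℝ) < 1 + ε := by linarith
  set b : ℝ := ε / (1 + ε) with hbdef
  have hb0 : (0:ℝ) < b := div_pos hε h1ε
  have hb1 : b < 1 := (div_lt_one h1ε).2 (by linarith)
  have hm0 : (0:ℝ) < (m:ℝ) := by exact_mod_cast hm
  have hmne : (m:ℝ) ≠ 0 := ne_of_gt hm0
  have hhm : h + 1 ≤ m := by omega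
  have hhmR : (h:ℝ) + 1 ≤ (m:ℝ) := by exact_mod_cast hhm
  have hinv : (1 + ε) / ε = b⁻¹ := by rw [hbdef, inv_div]
  have hy0 : (0:ℝ) < y := lt_of_lt_of_le one_pos hy1
  have hxpos : (0:ℝ) < y * b ^ (((m : ℝ) - h) / m) :=
    mul_pos hy0 (Real.rpow_pos_of_pos hb0 _)
  set x : ℝ := y * b ^ (((m : ℝ) - h) / m) with hxdef
  -- x ≤ 1
  have hy2' : y ≤ b ^ (-(1 / (m:ℝ))) := by
    rwa [hinv, Real.inv_rpow hb0.le, ← Real.rpow_neg hb0.le] at hy2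
  have hx1 : x ≤ 1 := by
    have h1 : x ≤ b ^ (-(1 / (m:ℝ))) * b ^ (((m : ℝ) - h) / m) :=
      mul_le_mul_of_nonneg_right hy2' (Real.rpow_pos_of_pos hb0 _).le
    have h2 : b ^ (-(1 / (m:ℝ))) * b ^ (((m : ℝ) - h) / m)
        = b ^ (((m:ℝ) - h - 1) / m) := by
      rw [← Real.rpow_add hb0]
      congr 1
      field_simp
      ring
    rw [h2] at h1
    refine h1.trans (Real.rpow_le_one hb0.le hb1.le ?_)
    apply div_nonneg _ hm0.le
    linarith
  -- sum bound for upper part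
  have hSle : (∑ i ∈ Finset.range (h + 1), b ^ (((m : ℝ) - i) / m))
      ≤ ((h:ℝ) + 1) * x := by
    have hstep : (∑ i ∈ Finset.range (h + 1), b ^ (((m : ℝ) - i) / m))
        ≤ (h + 1) • (b ^ (((m : ℝ) - h) / m)) := by
      have hc := Finset.sum_le_card_nsmul (Finset.range (h+1))
        (fun i => b ^ (((m : ℝ) - i) / m)) (b ^ (((m : ℝ) - h) / m)) ?_
      · rwa [Finset.card_range] at hc
      · intro i hi
        simp only [Finset.mem_range] at hi
        apply Real.rpow_le_rpow_of_exponent_ge hb0 hb1.le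
        have : (i:ℝ) ≤ h := by exact_mod_cast Nat.lt_succ_iff.mp hi
        apply div_le_div_of_nonneg_right ?_ hm0.le
        linarith
    have hbx : b ^ (((m : ℝ) - h) / m) ≤ x := le_mul_of_one_le_left
      (Real.rpow_pos_of_pos hb0 _).le hy1
    calc (∑ i ∈ Finset.range (h + 1), b ^ (((m : ℝ) - i) / m))
        ≤ (h + 1) • (b ^ (((m : ℝ) - h) / m)) := hstep
      _ = ((h:ℝ) + 1) * b ^ (((m : ℝ) - h) / m) := by
          simp [nsmul_eq_mul]
      _ ≤ ((h:ℝ) + 1) * x := by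
          apply mul_le_mul_of_nonneg_left hbx
          positivity
  constructor
  · -- lower bound
    rw [le_div_iff₀ hxpos]
    have hLHS : (ε / (1 + ε)) * ∑ j ∈ Finset.range m, ((1 + ε) / ε) ^ ((j : ℝ) / m)
        = ∑ j ∈ Finset.range m, b ^ (((m:ℝ) - j) / m) := by
      rw [Finset.mul_sum]
      apply Finset.sum_congr rfl
      intro j hj
      rw [hinv, Real.inv_rpow hb0.le, ← Real.rpow_neg hb0.le, ← hbdef]
      nth_rewrite 1 [← Real.rpow_one b]
      rw [← Real.rpow_add hb0]
      congr 1
      field_simp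
      ring
    rw [hLHS, Finset.sum_mul]
    have hsplit : ∑ j ∈ Finset.range m, b ^ (((m:ℝ) - j) / m) * x
        = (∑ j ∈ Finset.range (h+1), b ^ (((m:ℝ) - j) / m) * x)
          + ∑ j ∈ Finset.Ico (h+1) m, b ^ (((m:ℝ) - j) / m) * x := by
      rw [Finset.sum_range_add_sum_Ico _ hhm]
    rw [hsplit]
    have hpart1 : (∑ j ∈ Finset.range (h+1), b ^ (((m:ℝ) - j) / m) * x)
        ≤ ∑ j ∈ Finset.range (h+1), b ^ (((m:ℝ) - j) / m) := by
      apply Finset.sum_le_sum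
      intro j hj
      exact mul_le_of_le_one_right (Real.rpow_pos_of_pos hb0 _).le hx1
    have hpart2 : (∑ j ∈ Finset.Ico (h+1) m, b ^ (((m:ℝ) - j) / m) * x)
        ≤ ((m:ℝ) - h - 1) * x := by
      have hstep : (∑ j ∈ Finset.Ico (h+1) m, b ^ (((m:ℝ) - j) / m) * x)
          ≤ (m - (h+1)) • x := by
        have hc := Finset.sum_le_card_nsmul (Finset.Ico (h+1) m)
          (fun j => b ^ (((m:ℝ) - j) / m) * x) x ?_
        · rwa [Nat.card_Ico] at hc
        · intro j hj
          have hjm : j < m := (Finset.mem_Ico.mp hj).2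
          have hb1' : b ^ (((m:ℝ) - j) / m) ≤ 1 := by
            apply Real.rpow_le_one hb0.le hb1.le
            apply div_nonneg _ hm0.le
            have : (j:ℝ) ≤ m := by exact_mod_cast hjm.le
            linarith
          calc b ^ (((m:ℝ) - j) / m) * x ≤ 1 * x :=
                mul_le_mul_of_nonneg_right hb1' hxpos.le
            _ = x := one_mul x
      refine hstep.trans_eq ?_
      rw [nsmul_eq_mul]
      congr 1
      push_cast [hhm]
      ring
    linarith
  · -- upper bound
    rw [div_le_iff₀ hxpos]
    nlinarith [hSle, hxpos]
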